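/- In a finite positive weighted arena G (all edge weights strictly positive) with maximal weight M and state set S, for every player i and every rank j ≥ 0, every j-winning strategy of Player i that minimizes the (j+1)-th regret is j-bounded by 6·M³·|S|: against every opposing strategy in P_{-i}^j, the outcome up to C_i has both players' accumulated weights at most 6·M³·|S|. -/

import Mathlib

open scoped ENat

/-- A strategy maps a finite play (history, current position last) to the chosen
next position. -/
abbrev Strat (S : Type) := List S → S

/-- A two-player turn-based game arena: an ownership function (`true` = Player 1,
`false` = Player 2), an initial position and a transition relation. -/
structure Arena (S : Type) where
  owner : S → Bool
  init : S
  edge : S → S → Prop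

namespace Arena

variable {S : Type}

/-- A strategy is valid if it always follows edges of the arena. -/
def Valid (A : Arena S) (σ : Strat S) : Prop :=
  ∀ l : List S, A.edge (l.getLastD A.init) (σ l)

/-- Combine the strategy `σi` of player `i` with the strategy `σo` of her
opponent into a strategy profile. -/
def pairFor (i : Bool) (σi σo : Strat S) : Bool → Strat S :=
  fun b => if b = i then σi else σo

/-- The prefix of length `n` of the outcome of a strategy profile. -/
def outList (A : Arena S) (σ : Bool → Strat S) : ℕ → List S
  | 0 => [A.init]
  | n + 1 =>
      let l := outList A σ n
      l ++ [σ (A.owner (l.getLastD A.init)) l]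

/-- The position reached after `n` rounds. -/
def cur (A : Arena S) (σ : Bool → Strat S) (n : ℕ) : S :=
  (A.outList σ n).getLastD A.init

/-- The total weight of a finite play. -/
def pathWeight (w : S → S → ℕ) (l : List S) : ℕ :=
  ((l.zip l.tail).map fun p => w p.1 p.2).sum

/-- `n` is the round of the first visit of the outcome to the target set `C`. -/
def firstVisit (A : Arena S) (C : Set S) (σ : Bool → Strat S) (n : ℕ) : Prop :=
  A.cur σ n ∈ C ∧ ∀ m < n, A.cur σ m ∉ C

/-- The utility of a strategy profile w.r.t. edge weights `w` and target set `C`: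
the sum of the weights up to the first visit to `C`, and `⊤` if `C` is never
visited. -/
noncomputable def util (A : Arena S) (w : S → S → ℕ) (C : Set S)
    (σ : Bool → Strat S) : ℕ∞ :=
  ⨅ (n : ℕ) (_ : A.firstVisit C σ n), (pathWeight w (A.outList σ n) : ℕ∞)

/-- A strategy of player `i` is winning if all its outcomes against valid
opposing strategies visit the target set `C`. -/
def Winning (A : Arena S) (C : Set S) (i : Bool) (σi : Strat S) : Prop :=
  ∀ σo : Strat S, A.Valid σo → ∃ n, A.cur (pairFor i σi σo) n ∈ C

/-- Best response value of player `i` against opposing strategy `σo`. -/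
noncomputable def br (A : Arena S) (w : S → S → ℕ) (C : Set S)
    (i : Bool) (σo : Strat S) : ℕ∞ :=
  ⨅ (σi : Strat S) (_ : A.Valid σi), A.util w C (pairFor i σi σo)

end Arena

/-- Regret of utility `u` w.r.t. best-response value `b`, with the convention
`⊤ - ⊤ = ⊤`. -/
noncomputable def regPairVal (u b : ℕ∞) : ℕ∞ := if u = ⊤ then ⊤ else u - b

namespace Arena

variable {S : Type}

/-- The regret of strategy `σi` of player `i`. -/
noncomputable def regOf (A : Arena S) (w : S → S → ℕ) (C : Set S)
    (i : Bool) (σi : Strat S) : ℕ∞ :=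
  ⨆ (σo : Strat S) (_ : A.Valid σo),
    regPairVal (A.util w C (pairFor i σi σo)) (A.br w C i σo)

/-- The minimal regret of player `i`. -/
noncomputable def regMin (A : Arena S) (w : S → S → ℕ) (C : Set S) (i : Bool) : ℕ∞ :=
  ⨅ (σi : Strat S) (_ : A.Valid σi), A.regOf w C i σi

end Arena

section Iterated

variable {Λ1 Λ2 : Type}

/-- Regret of `x` when the row player is restricted to `P1` and the column
player to `P2` (utilities `u`, penalties to be minimized). -/
noncomputable def regP (u : Λ1 → Λ2 → ℕ∞) (P1 : Set Λ1) (P2 : Set Λ2)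
    (x : Λ1) : ℕ∞ :=
  ⨆ y ∈ P2, regPairVal (u x y) (⨅ x' ∈ P1, u x' y)

/-- Minimal regret of the row player over `P1` against `P2`. -/
noncomputable def regPmin (u : Λ1 → Λ2 → ℕ∞) (P1 : Set Λ1) (P2 : Set Λ2) : ℕ∞ :=
  ⨅ x ∈ P1, regP u P1 P2 x

/-- The delete operator: keep exactly the strategies of each player minimizing
her regret against the current strategy sets. -/
noncomputable def Dop (u1 u2 : Λ1 → Λ2 → ℕ∞) (P : Set Λ1 × Set Λ2) :
    Set Λ1 × Set Λ2 :=
  ({x ∈ P.1 | regP u1 P.1 P.2 x = regPmin u1 P.1 P.2},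
   {y ∈ P.2 | regP (fun y' x' => u2 x' y') P.2 P.1 y
      = regPmin (fun y' x' => u2 x' y') P.2 P.1})

/-- The strategies surviving `j` rounds of deletion. -/
noncomputable def Pset (u1 u2 : Λ1 → Λ2 → ℕ∞) (j : ℕ) : Set Λ1 × Set Λ2 :=
  (Dop u1 u2)^[j] (Set.univ, Set.univ)

end Iterated

namespace Arena

variable {S : Type}

/-- The type of valid strategies of an arena. -/
def VStrat (A : Arena S) := {σ : Strat S // A.Valid σ}

/-- Utility of player `i` as a function of her strategy and her opponent's
strategy (edge weights `w`, target sets `C`). -/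
noncomputable def uFor (A : Arena S) (w : Bool → S → S → ℕ) (C : Bool → Set S)
    (i : Bool) : A.VStrat → A.VStrat → ℕ∞ :=
  fun x y => A.util (w i) (C i) (pairFor i x.1 y.1)

/-- The pair of sets of strategies surviving `j` rounds of deletion of
non-regret-minimizing strategies (Player 1 component first). -/
noncomputable def PIter (A : Arena S) (w : Bool → S → S → ℕ) (C : Bool → Set S)
    (j : ℕ) : Set A.VStrat × Set A.VStrat :=
  Pset (A.uFor w C true) (fun x y => A.uFor w C false y x) j

/-- The set of player-`i` strategies surviving `j` rounds of deletion. -/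
noncomputable def Pside (A : Arena S) (w : Bool → S → S → ℕ) (C : Bool → Set S)
    (i : Bool) (j : ℕ) : Set A.VStrat :=
  if i = true then (A.PIter w C j).1 else (A.PIter w C j).2

/-- The iterated regret of player `i` (the stable value of the nonincreasing
sequence of `j`-th regrets). -/
noncomputable def regStar (A : Arena S) (w : Bool → S → S → ℕ)
    (C : Bool → Set S) (i : Bool) : ℕ∞ :=
  ⨅ j : ℕ, regPmin (A.uFor w C i) (A.Pside w C i j) (A.Pside w C (!i) j)

end Arena

/-! ### Auxiliary development -/

open Set

namespace Arena

variable {S : Type}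

section Plays

variable (A : Arena S)

lemma outList_zero (σ : Bool → Strat S) : A.outList σ 0 = [A.init] := rfl

lemma outList_succ (σ : Bool → Strat S) (n : ℕ) :
    A.outList σ (n + 1) =
      A.outList σ n ++ [σ (A.owner (A.cur σ n)) (A.outList σ n)] := rfl

lemma cur_zero (σ : Bool → Strat S) : A.cur σ 0 = A.init := rfl

lemma getLastD_cons' {α : Type _} (x : α) (l : List α) (d : α) :
    (x :: l).getLastD d = l.getLastD x := by
  cases l <;> simp [List.getLastD]

lemma pathWeight_cons_cons (w : S → S → ℕ) (x y : S) (t : List S) :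
    pathWeight w (x :: y :: t) = w x y + pathWeight w (y :: t) := by
  simp [pathWeight]

lemma cur_succ (σ : Bool → Strat S) (n : ℕ) :
    A.cur σ (n + 1) = σ (A.owner (A.cur σ n)) (A.outList σ n) := by
  show (A.outList σ n ++ [σ (A.owner (A.cur σ n)) (A.outList σ n)]).getLastD A.init = _
  simp

lemma length_outList (σ : Bool → Strat S) (n : ℕ) :
    (A.outList σ n).length = n + 1 := by
  induction n with
  | zero => rfl
  | succ n ih => rw [outList_succ]; simp [ih]

lemma outList_ne_nil (σ : Bool → Strat S) (n : ℕ) : A.outList σ n ≠ [] := by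
  have := A.length_outList σ n
  intro h; rw [h] at this; simp at this

lemma mem_outList {σ : Bool → Strat S} {n : ℕ} {a : S} :
    a ∈ A.outList σ n ↔ ∃ k ≤ n, A.cur σ k = a := by
  induction n with
  | zero =>
    simp only [outList_zero, List.mem_singleton]
    constructor
    · rintro rfl; exact ⟨0, le_refl _, rfl⟩
    · rintro ⟨k, hk, rfl⟩; interval_cases k; rfl
  | succ n ih =>
    rw [outList_succ]
    simp only [List.mem_append, List.mem_singleton, ih]
    constructor
    · rintro (⟨k, hk, rfl⟩ | rfl)
      · exact ⟨k, by omega, rfl⟩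
      · exact ⟨n + 1, le_refl _, A.cur_succ σ n⟩
    · rintro ⟨k, hk, rfl⟩
      rcases Nat.lt_or_ge k (n + 1) with h | h
      · exact Or.inl ⟨k, by omega, rfl⟩
      · have : k = n + 1 := by omega
        subst this
        exact Or.inr (A.cur_succ σ n)

lemma cur_mem_outList (σ : Bool → Strat S) {k n : ℕ} (h : k ≤ n) :
    A.cur σ k ∈ A.outList σ n := A.mem_outList.2 ⟨k, h, rfl⟩

lemma pairFor_valid {i : Bool} {x y : Strat S} (hx : A.Valid x) (hy : A.Valid y)
    (b : Bool) : A.Valid (pairFor i x y b) := by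
  unfold pairFor
  by_cases h : b = i <;> simp [h, hx, hy]

lemma pairFor_not (i : Bool) (x y : Strat S) :
    pairFor (!i) y x = pairFor i x y := by
  funext b l
  cases b <;> cases i <;> rfl

lemma pairFor_same (i : Bool) (x y : Strat S) : pairFor i x y i = x := by
  simp [pairFor]

lemma pairFor_other {b i : Bool} (h : b ≠ i) (x y : Strat S) :
    pairFor i x y b = y := by
  simp [pairFor, h]

lemma edge_cur {σ : Bool → Strat S} (hv : ∀ b, A.Valid (σ b)) (n : ℕ) :
    A.edge (A.cur σ n) (A.cur σ (n + 1)) := by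
  rw [cur_succ]
  exact hv _ (A.outList σ n)

lemma pathWeight_append_singleton (w : S → S → ℕ) (l : List S) (hl : l ≠ [])
    (d a : S) :
    pathWeight w (l ++ [a]) = pathWeight w l + w (l.getLastD d) a := by
  induction l generalizing d with
  | nil => simp at hl
  | cons x t ih =>
    cases t with
    | nil => simp [pathWeight]
    | cons y t' =>
      simp only [List.cons_append]
      rw [pathWeight_cons_cons, pathWeight_cons_cons, ← List.cons_append,
        ih (by simp) x]
      simp only [getLastD_cons']
      ring

lemma pathWeight_outList_succ (w : S → S → ℕ) (σ : Bool → Strat S) (n : ℕ) :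
    pathWeight w (A.outList σ (n + 1)) =
      pathWeight w (A.outList σ n) + w (A.cur σ n) (A.cur σ (n + 1)) := by
  rw [outList_succ, pathWeight_append_singleton w _ (A.outList_ne_nil σ n) A.init,
    cur_succ]
  rfl

lemma pathWeight_outList_le {w : S → S → ℕ} {M : ℕ} (hM : ∀ s t, w s t ≤ M)
    (σ : Bool → Strat S) (n : ℕ) :
    pathWeight w (A.outList σ n) ≤ M * n := by
  induction n with
  | zero => simp [outList_zero, pathWeight]
  | succ n ih =>
    rw [pathWeight_outList_succ]
    have := hM (A.cur σ n) (A.cur σ (n + 1))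
    calc pathWeight w (A.outList σ n) + w (A.cur σ n) (A.cur σ (n+1))
        ≤ M * n + M := by omega
      _ = M * (n + 1) := by ring

lemma le_pathWeight_outList {w : S → S → ℕ} (hpos : ∀ s t, A.edge s t → 1 ≤ w s t)
    {σ : Bool → Strat S} (hv : ∀ b, A.Valid (σ b)) (n : ℕ) :
    n ≤ pathWeight w (A.outList σ n) := by
  induction n with
  | zero => simp
  | succ n ih =>
    rw [pathWeight_outList_succ]
    have := hpos _ _ (A.edge_cur hv n)
    omega

end Plays

end Arena

namespace Arena

variable {S : Type}

section Util

variable (A : Arena S)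

lemma firstVisit_unique {C : Set S} {σ : Bool → Strat S} {n n' : ℕ}
    (h : A.firstVisit C σ n) (h' : A.firstVisit C σ n') : n = n' := by
  rcases Nat.lt_trichotomy n n' with hlt | heq | hlt
  · exact absurd h.1 (h'.2 n hlt)
  · exact heq
  · exact absurd h'.1 (h.2 n' hlt)

lemma util_eq_of_firstVisit {w : S → S → ℕ} {C : Set S} {σ : Bool → Strat S}
    {n : ℕ} (h : A.firstVisit C σ n) :
    A.util w C σ = (pathWeight w (A.outList σ n) : ℕ∞) := by
  apply le_antisymm
  · exact iInf₂_le n h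
  · apply le_iInf₂
    intro n' h'
    rw [A.firstVisit_unique h h']

lemma exists_firstVisit {C : Set S} {σ : Bool → Strat S} {k : ℕ}
    (h : A.cur σ k ∈ C) : ∃ n ≤ k, A.firstVisit C σ n := by
  classical
  have hex : ∃ n, A.cur σ n ∈ C := ⟨k, h⟩
  refine ⟨Nat.find hex, Nat.find_min' hex h, Nat.find_spec hex, ?_⟩
  intro m hm
  exact Nat.find_min hex hm

lemma util_eq_top {w : S → S → ℕ} {C : Set S} {σ : Bool → Strat S}
    (h : ∀ n, A.cur σ n ∉ C) : A.util w C σ = ⊤ := by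
  unfold util
  rw [iInf_eq_top]
  intro n
  rw [iInf_eq_top]
  intro hfv
  exact absurd hfv.1 (h n)

lemma exists_visit_of_util_ne_top {w : S → S → ℕ} {C : Set S}
    {σ : Bool → Strat S} (h : A.util w C σ ≠ ⊤) : ∃ n, A.cur σ n ∈ C := by
  by_contra hc
  push_neg at hc
  exact h (A.util_eq_top hc)

lemma util_le_of_visit {w : S → S → ℕ} {M : ℕ} (hM : ∀ s t, w s t ≤ M)
    {C : Set S} {σ : Bool → Strat S} {k : ℕ} (h : A.cur σ k ∈ C) :
    A.util w C σ ≤ ((M * k : ℕ) : ℕ∞) := by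
  obtain ⟨n, hnk, hfv⟩ := A.exists_firstVisit h
  rw [A.util_eq_of_firstVisit hfv]
  have h1 : pathWeight w (A.outList σ n) ≤ M * n := A.pathWeight_outList_le hM σ n
  have h2 : M * n ≤ M * k := Nat.mul_le_mul_left M hnk
  exact_mod_cast le_trans h1 h2

lemma outList_congr {σ σ' : Bool → Strat S} {P : List S → Prop}
    (hP : ∀ l, P l → ∀ b, σ b l = σ' b l) :
    ∀ n, (∀ m, m < n → P (A.outList σ m)) → A.outList σ' n = A.outList σ n := by
  intro n
  induction n with
  | zero => intro _; rfl
  | succ n ih =>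
    intro h
    have h1 : A.outList σ' n = A.outList σ n := ih (fun m hm => h m (by omega))
    have h2 : A.cur σ' n = A.cur σ n := by unfold cur; rw [h1]
    rw [outList_succ, outList_succ, h1, h2, hP _ (h n (by omega))]

lemma cur_congr {σ σ' : Bool → Strat S} {P : List S → Prop}
    (hP : ∀ l, P l → ∀ b, σ b l = σ' b l) {n : ℕ}
    (h : ∀ m, m < n → P (A.outList σ m)) {k : ℕ} (hk : k ≤ n) :
    A.cur σ' k = A.cur σ k := by
  unfold cur
  rw [A.outList_congr hP k (fun m hm => h m (by omega))]

lemma util_congr_until {w' : S → S → ℕ} {Co : Set S} {σ σ' : Bool → Strat S}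
    (H : ∀ l, (∀ s ∈ l, s ∉ Co) → ∀ b, σ b l = σ' b l) :
    A.util w' Co σ' = A.util w' Co σ := by
  by_cases hvis : ∃ k, A.cur σ k ∈ Co
  · obtain ⟨k, hk⟩ := hvis
    obtain ⟨n, hnk, hfv⟩ := A.exists_firstVisit hk
    have hpre : ∀ m, m < n → (∀ s ∈ A.outList σ m, s ∉ Co) := by
      intro m hm s hs
      obtain ⟨j, hj, rfl⟩ := A.mem_outList.1 hs
      exact hfv.2 j (by omega)
    have hfv' : A.firstVisit Co σ' n := by
      constructor
      · rw [A.cur_congr H hpre (le_refl n)]; exact hfv.1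
      · intro m hm
        rw [A.cur_congr H hpre (le_of_lt hm)]
        exact hfv.2 m hm
    rw [A.util_eq_of_firstVisit hfv, A.util_eq_of_firstVisit hfv',
      A.outList_congr H n hpre]
  · push_neg at hvis
    have hall : ∀ n, A.cur σ' n ∉ Co := by
      intro n
      have : A.cur σ' n = A.cur σ n := by
        apply A.cur_congr H (n := n) _ (le_refl n)
        intro m hm s hs
        obtain ⟨j, hj, rfl⟩ := A.mem_outList.1 hs
        exact hvis j
      rw [this]; exact hvis n
    rw [A.util_eq_top hvis, A.util_eq_top hall]

end Util

end Arena

namespace Arena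

variable {S : Type}

section Attr

set_option linter.unusedSectionVars false

variable (A : Arena S) (p : Bool) (T : Set S)

/-- One step of the attractor construction. -/
def attrF (X : Set S) : Set S :=
  X ∪ {s | if A.owner s = p then ∃ t, A.edge s t ∧ t ∈ X else ∀ t, A.edge s t → t ∈ X}

/-- Attractor levels. -/
def attr : ℕ → Set S
  | 0 => T
  | k + 1 => A.attrF p (attr k)

lemma attr_succ (k : ℕ) : A.attr p T (k + 1) = A.attrF p (A.attr p T k) := rfl

/-- The full attractor. -/
def attrU : Set S := {s | ∃ k, s ∈ A.attr p T k}

lemma attr_subset_succ (k : ℕ) : A.attr p T k ⊆ A.attr p T (k + 1) := by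
  rw [attr_succ]; exact Set.subset_union_left

lemma attr_mono {k k' : ℕ} (h : k ≤ k') : A.attr p T k ⊆ A.attr p T k' := by
  induction h with
  | refl => exact le_refl _
  | step _ ih => exact le_trans ih (A.attr_subset_succ p T _)

lemma attr_stable {k : ℕ} (h : A.attr p T (k + 1) = A.attr p T k) (d : ℕ) :
    A.attr p T (k + d) = A.attr p T k := by
  induction d with
  | zero => rfl
  | succ d ih =>
    rw [show k + (d+1) = (k+d)+1 by omega, attr_succ, ih, ← attr_succ]
    exact h

variable [Fintype S]

lemma exists_attr_stable : ∃ k ≤ Fintype.card S, A.attr p T (k + 1) = A.attr p T k := by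
  by_contra hc
  push_neg at hc
  have key : ∀ k, k ≤ Fintype.card S + 1 → k ≤ (A.attr p T k).ncard := by
    intro k
    induction k with
    | zero => intro _; exact Nat.zero_le _
    | succ k ih =>
      intro hk
      have h1 : A.attr p T k ⊂ A.attr p T (k + 1) :=
        ssubset_of_subset_of_ne (A.attr_subset_succ p T k) (Ne.symm (hc k (by omega)))
      have h2 : (A.attr p T k).ncard < (A.attr p T (k + 1)).ncard :=
        Set.ncard_lt_ncard h1 (Set.toFinite _)
      have := ih (by omega)
      omega
  have h1 := key (Fintype.card S + 1) (le_refl _)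
  have h2 : (A.attr p T (Fintype.card S + 1)).ncard ≤ Fintype.card S := by
    simpa [Set.ncard_univ] using
      Set.ncard_le_ncard (Set.subset_univ (A.attr p T (Fintype.card S + 1))) (Set.toFinite _)
  omega

lemma mem_attr_card {s : S} (h : s ∈ A.attrU p T) : s ∈ A.attr p T (Fintype.card S) := by
  obtain ⟨k, hk⟩ := h
  obtain ⟨k₀, hk₀, hst⟩ := A.exists_attr_stable p T
  rcases le_or_gt k (Fintype.card S) with h' | h'
  · exact A.attr_mono p T h' hk
  · have : k = k₀ + (k - k₀) := by omega
    rw [this, A.attr_stable p T hst] at hk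
    exact A.attr_mono p T hk₀ hk

lemma subset_attrU : T ⊆ A.attrU p T := fun s hs => ⟨0, hs⟩

/-- Rank of a state in the attractor. -/
noncomputable def rankA (s : S) : ℕ := sInf {k | s ∈ A.attr p T k}

lemma mem_attr_rank {s : S} (h : s ∈ A.attrU p T) : s ∈ A.attr p T (A.rankA p T s) :=
  Nat.sInf_mem h

lemma not_mem_attr_of_lt_rank {s : S} {k : ℕ} (h : k < A.rankA p T s) :
    s ∉ A.attr p T k := Nat.notMem_of_lt_sInf h

lemma rank_le_of_mem {s : S} {k : ℕ} (h : s ∈ A.attr p T k) : A.rankA p T s ≤ k :=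
  Nat.sInf_le h

lemma rank_le_card [Fintype S] {s : S} (h : s ∈ A.attrU p T) :
    A.rankA p T s ≤ Fintype.card S :=
  A.rank_le_of_mem p T (A.mem_attr_card p T h)

lemma attr_step_own {s : S} (h : s ∈ A.attrU p T) (hT : s ∉ T)
    (hp : A.owner s = p) :
    ∃ t, A.edge s t ∧ t ∈ A.attrU p T ∧ A.rankA p T t < A.rankA p T s := by
  set r := A.rankA p T s with hr
  have hrpos : r ≠ 0 := by
    intro h0
    have := A.mem_attr_rank p T h
    rw [← hr, h0] at this
    exact hT this
  have hmem : s ∈ A.attr p T ((r - 1) + 1) := by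
    rw [show (r-1)+1 = r by omega]
    exact A.mem_attr_rank p T h
  have hnot : s ∉ A.attr p T (r - 1) := A.not_mem_attr_of_lt_rank p T (by omega)
  rcases hmem with hmem | hmem
  · exact absurd hmem hnot
  · simp only [Set.mem_setOf_eq, hp, if_true] at hmem
    obtain ⟨t, het, ht⟩ := hmem
    refine ⟨t, het, ⟨_, ht⟩, ?_⟩
    have := A.rank_le_of_mem p T ht
    omega

lemma attr_step_opp {s : S} (h : s ∈ A.attrU p T) (hT : s ∉ T)
    (hp : A.owner s ≠ p) {t : S} (het : A.edge s t) :
    t ∈ A.attrU p T ∧ A.rankA p T t < A.rankA p T s := by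
  set r := A.rankA p T s with hr
  have hrpos : r ≠ 0 := by
    intro h0
    have := A.mem_attr_rank p T h
    rw [← hr, h0] at this
    exact hT this
  have hmem : s ∈ A.attr p T ((r - 1) + 1) := by
    rw [show (r-1)+1 = r by omega]
    exact A.mem_attr_rank p T h
  have hnot : s ∉ A.attr p T (r - 1) := A.not_mem_attr_of_lt_rank p T (by omega)
  rcases hmem with hmem | hmem
  · exact absurd hmem hnot
  · simp only [Set.mem_setOf_eq, hp, if_false] at hmem
    have ht := hmem t het
    refine ⟨⟨_, ht⟩, ?_⟩
    have := A.rank_le_of_mem p T ht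
    omega

lemma attr_compl_own {s t : S} (h : s ∉ A.attrU p T) (hp : A.owner s = p)
    (het : A.edge s t) : t ∉ A.attrU p T := by
  intro ht
  apply h
  refine ⟨Fintype.card S + 1, Or.inr ?_⟩
  simp only [Set.mem_setOf_eq, hp, if_true]
  exact ⟨t, het, A.mem_attr_card p T ht⟩

lemma attr_compl_opp {s : S} (h : s ∉ A.attrU p T) (hp : A.owner s ≠ p)
    (hsucc : ∃ t, A.edge s t) : ∃ t, A.edge s t ∧ t ∉ A.attrU p T := by
  by_contra hc
  push_neg at hc
  apply h
  refine ⟨Fintype.card S + 1, Or.inr ?_⟩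
  simp only [Set.mem_setOf_eq, hp, if_false]
  exact fun t het => A.mem_attr_card p T (hc t het)

end Attr

end Arena

namespace Arena

variable {S : Type}

section Strats

set_option linter.unusedSectionVars false

attribute [local instance] Classical.propDecidable

variable (A : Arena S) (hsucc : ∀ s : S, ∃ t, A.edge s t) (p : Bool) (T : Set S)
  [Fintype S]

/-- A canonical valid strategy. -/
noncomputable def filler : Strat S := fun l => (hsucc (l.getLastD A.init)).choose

lemma filler_valid : A.Valid (A.filler hsucc) := fun l =>
  (hsucc (l.getLastD A.init)).choose_spec

/-- The attractor move. -/
noncomputable def attStep (s : S) : S :=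
  if h : ∃ t, A.edge s t ∧ t ∈ A.attrU p T ∧ A.rankA p T t < A.rankA p T s then
    h.choose
  else (hsucc s).choose

lemma attStep_edge (s : S) : A.edge s (A.attStep hsucc p T s) := by
  unfold attStep
  split
  · next h => exact h.choose_spec.1
  · exact (hsucc s).choose_spec

lemma attStep_spec {s : S} (h : s ∈ A.attrU p T) (hT : s ∉ T)
    (hp : A.owner s = p) :
    A.attStep hsucc p T s ∈ A.attrU p T ∧
      A.rankA p T (A.attStep hsucc p T s) < A.rankA p T s := by
  obtain ⟨t, het, ht, hr⟩ := A.attr_step_own p T h hT hp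
  unfold attStep
  rw [dif_pos ⟨t, het, ht, hr⟩]
  exact ⟨(Exists.choose_spec (⟨t, het, ht, hr⟩ : ∃ t, A.edge s t ∧ t ∈ A.attrU p T ∧
    A.rankA p T t < A.rankA p T s)).2.1,
    (Exists.choose_spec (⟨t, het, ht, hr⟩ : ∃ t, A.edge s t ∧ t ∈ A.attrU p T ∧
    A.rankA p T t < A.rankA p T s)).2.2⟩

/-- The attractor strategy. -/
noncomputable def attStrat : Strat S := fun l => A.attStep hsucc p T (l.getLastD A.init)

lemma attStrat_valid : A.Valid (A.attStrat hsucc p T) := fun l =>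
  A.attStep_edge hsucc p T _

/-- The trapping move. -/
noncomputable def trapStep (s : S) : S :=
  if h : ∃ t, A.edge s t ∧ t ∉ A.attrU p T then h.choose else (hsucc s).choose

lemma trapStep_edge (s : S) : A.edge s (A.trapStep hsucc p T s) := by
  unfold trapStep
  split
  · next h => exact h.choose_spec.1
  · exact (hsucc s).choose_spec

lemma trapStep_spec {s : S} (h : s ∉ A.attrU p T) (hp : A.owner s ≠ p) :
    A.trapStep hsucc p T s ∉ A.attrU p T := by
  obtain ⟨t, het, ht⟩ := A.attr_compl_opp p T h hp (hsucc s)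
  unfold trapStep
  rw [dif_pos ⟨t, het, ht⟩]
  exact (Exists.choose_spec (⟨t, het, ht⟩ : ∃ t, A.edge s t ∧ t ∉ A.attrU p T)).2

/-- The trapping strategy. -/
noncomputable def trapStrat : Strat S := fun l => A.trapStep hsucc p T (l.getLastD A.init)

lemma trapStrat_valid : A.Valid (A.trapStrat hsucc p T) := fun l =>
  A.trapStep_edge hsucc p T _

/-- Reaching the target from the attractor. -/
lemma attr_reach {σ : Bool → Strat S} (hv : ∀ b, A.Valid (σ b)) (m : ℕ)
    (hcur : A.cur σ m ∈ A.attrU p T)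
    (hplay : ∀ m' ≥ m, A.cur σ m' ∈ A.attrU p T → A.cur σ m' ∉ T →
      A.owner (A.cur σ m') = p → A.cur σ (m' + 1) = A.attStep hsucc p T (A.cur σ m')) :
    ∃ n, m ≤ n ∧ n ≤ m + Fintype.card S ∧ A.cur σ n ∈ T := by
  suffices h : ∀ r m, A.rankA p T (A.cur σ m) ≤ r → A.cur σ m ∈ A.attrU p T →
      (∀ m' ≥ m, A.cur σ m' ∈ A.attrU p T → A.cur σ m' ∉ T →
        A.owner (A.cur σ m') = p → A.cur σ (m' + 1) = A.attStep hsucc p T (A.cur σ m')) →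
      ∃ n, m ≤ n ∧ n ≤ m + r ∧ A.cur σ n ∈ T by
    obtain ⟨n, h1, h2, h3⟩ := h (A.rankA p T (A.cur σ m)) m (le_refl _) hcur hplay
    exact ⟨n, h1, le_trans h2 (by
      have := A.rank_le_card p T hcur
      omega), h3⟩
  intro r
  induction r with
  | zero =>
    intro m hrk hmem _
    refine ⟨m, le_refl _, by omega, ?_⟩
    have h0 : A.rankA p T (A.cur σ m) = 0 := by omega
    have := A.mem_attr_rank p T hmem
    rw [h0] at this
    exact this
  | succ r ih =>
    intro m hrk hmem hplay'
    by_cases hT : A.cur σ m ∈ T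
    · exact ⟨m, le_refl _, by omega, hT⟩
    · have hstep : A.cur σ (m + 1) ∈ A.attrU p T ∧
          A.rankA p T (A.cur σ (m + 1)) < A.rankA p T (A.cur σ m) := by
        by_cases hp : A.owner (A.cur σ m) = p
        · rw [hplay' m (le_refl _) hmem hT hp]
          exact A.attStep_spec hsucc p T hmem hT hp
        · exact A.attr_step_opp p T hmem hT hp (A.edge_cur hv m)
      obtain ⟨n, h1, h2, h3⟩ := ih (m + 1) (by omega) hstep.1
        (fun m' hm' => hplay' m' (by omega))
      exact ⟨n, by omega, by omega, h3⟩

/-- Trapping: staying outside the attractor forever. -/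
lemma trap_avoid {σ : Bool → Strat S} (hv : ∀ b, A.Valid (σ b)) (m : ℕ)
    (hcur : A.cur σ m ∉ A.attrU p T)
    (hplay : ∀ m' ≥ m, A.cur σ m' ∉ A.attrU p T → A.owner (A.cur σ m') ≠ p →
      A.cur σ (m' + 1) = A.trapStep hsucc p T (A.cur σ m')) :
    ∀ n, m ≤ n → A.cur σ n ∉ A.attrU p T := by
  intro n hn
  induction n with
  | zero =>
    have : m = 0 := by omega
    subst this; exact hcur
  | succ n ih =>
    rcases Nat.lt_or_ge m (n + 1) with h | h
    · have hn' : m ≤ n := by omega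
      have hout := ih hn'
      by_cases hp : A.owner (A.cur σ n) = p
      · exact A.attr_compl_own p T hout hp (A.edge_cur hv n)
      · rw [hplay n hn' hout hp]
        exact A.trapStep_spec hsucc p T hout hp
    · have : m = n + 1 := by omega
      subst this; exact hcur

end Strats

end Arena

namespace Arena

variable {S : Type}

section AttrPlays

set_option linter.unusedSectionVars false

attribute [local instance] Classical.propDecidable

variable (A : Arena S) (hsucc : ∀ s : S, ∃ t, A.edge s t) (p : Bool) (T : Set S)
  [Fintype S]

lemma play_trap_opp (x : Strat S) (m' : ℕ)
    (hown : A.owner (A.cur (pairFor p x (A.trapStrat hsucc p T)) m') ≠ p) :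
    A.cur (pairFor p x (A.trapStrat hsucc p T)) (m' + 1) =
      A.trapStep hsucc p T (A.cur (pairFor p x (A.trapStrat hsucc p T)) m') := by
  rw [cur_succ, pairFor_other hown]
  rfl

lemma play_att_own (y : Strat S) (m' : ℕ)
    (hown : A.owner (A.cur (pairFor p (A.attStrat hsucc p T) y) m') = p) :
    A.cur (pairFor p (A.attStrat hsucc p T) y) (m' + 1) =
      A.attStep hsucc p T (A.cur (pairFor p (A.attStrat hsucc p T) y) m') := by
  rw [cur_succ, hown, pairFor_same]
  rfl

lemma trap_opp_avoid (hinit : A.init ∉ A.attrU p T) {x : Strat S}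
    (hxv : A.Valid x) :
    ∀ n, A.cur (pairFor p x (A.trapStrat hsucc p T)) n ∉ T := by
  intro n hC
  have hv : ∀ b, A.Valid (pairFor p x (A.trapStrat hsucc p T) b) :=
    A.pairFor_valid hxv (A.trapStrat_valid hsucc p T)
  have h := A.trap_avoid hsucc p T hv 0 (by rw [cur_zero]; exact hinit)
    (fun m' _ _ hown => A.play_trap_opp hsucc p T x m' hown) n (Nat.zero_le n)
  exact h (A.subset_attrU p T hC)

lemma att_own_util (w' : S → S → ℕ) {M : ℕ} (hMw : ∀ s t, w' s t ≤ M)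
    (hinit : A.init ∈ A.attrU p T) {y : Strat S} (hyv : A.Valid y) :
    A.util w' T (pairFor p (A.attStrat hsucc p T) y) ≤
      ((M * Fintype.card S : ℕ) : ℕ∞) := by
  have hv : ∀ b, A.Valid (pairFor p (A.attStrat hsucc p T) y b) :=
    A.pairFor_valid (A.attStrat_valid hsucc p T) hyv
  obtain ⟨n, _, hn, hC⟩ := A.attr_reach hsucc p T hv 0 (by rw [cur_zero]; exact hinit)
    (fun m' _ _ _ hown => A.play_att_own hsucc p T y m' hown)
  refine le_trans (A.util_le_of_visit hMw hC) ?_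
  exact_mod_cast Nat.mul_le_mul_left M (by omega)

end AttrPlays

end Arena

section RegPHelpers

variable {Λ1 Λ2 : Type}

lemma regPairVal_le_left {u b : ℕ∞} (h : u ≠ ⊤) : regPairVal u b ≤ u := by
  rw [regPairVal, if_neg h]
  exact tsub_le_self

lemma le_regP {u : Λ1 → Λ2 → ℕ∞} {P1 : Set Λ1} {P2 : Set Λ2} {x : Λ1} {y : Λ2}
    (hy : y ∈ P2) :
    regPairVal (u x y) (⨅ x' ∈ P1, u x' y) ≤ regP u P1 P2 x :=
  le_iSup₂ (f := fun y' (_ : y' ∈ P2) => regPairVal (u x y') (⨅ x' ∈ P1, u x' y')) y hy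

lemma regP_le_of_forall {u : Λ1 → Λ2 → ℕ∞} {P1 : Set Λ1} {P2 : Set Λ2} {x : Λ1}
    {B : ℕ} (h : ∀ y ∈ P2, u x y ≤ (B : ℕ∞)) : regP u P1 P2 x ≤ (B : ℕ∞) := by
  apply iSup₂_le
  intro y hy
  have hne : u x y ≠ ⊤ := ne_top_of_le_ne_top (by simp) (h y hy)
  exact le_trans (regPairVal_le_left hne) (h y hy)

lemma regP_extract_ne_top {u : Λ1 → Λ2 → ℕ∞} {P1 : Set Λ1} {P2 : Set Λ2}
    {x : Λ1} {y : Λ2} (hy : y ∈ P2) {B : ℕ∞} (hB : B ≠ ⊤)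
    (h : regP u P1 P2 x ≤ B) : u x y ≠ ⊤ := by
  intro ht
  have h1 := le_trans (le_regP (u := u) (P1 := P1) hy) h
  rw [regPairVal, if_pos ht] at h1
  exact hB (top_le_iff.1 h1)

lemma regP_extract_le {u : Λ1 → Λ2 → ℕ∞} {P1 : Set Λ1} {P2 : Set Λ2}
    {x : Λ1} {y : Λ2} (hy : y ∈ P2) {B B' : ℕ∞} (hB : B ≠ ⊤)
    (h : regP u P1 P2 x ≤ B) (hbr : (⨅ x' ∈ P1, u x' y) ≤ B') :
    u x y ≤ B + B' := by
  have hne := regP_extract_ne_top hy hB h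
  have h1 := le_trans (le_regP (u := u) (P1 := P1) hy) h
  rw [regPairVal, if_neg hne] at h1
  exact le_trans (tsub_le_iff_right.1 h1) (add_le_add_right hbr B)

lemma regPmin_le {u : Λ1 → Λ2 → ℕ∞} {P1 : Set Λ1} {P2 : Set Λ2} {x : Λ1}
    (hx : x ∈ P1) : regPmin u P1 P2 ≤ regP u P1 P2 x :=
  iInf₂_le x hx

lemma biInf_le_mem {u : Λ1 → Λ2 → ℕ∞} {P1 : Set Λ1} {x' : Λ1} {y : Λ2}
    (hx : x' ∈ P1) : (⨅ x'' ∈ P1, u x'' y) ≤ u x' y :=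
  iInf₂_le x' hx

end RegPHelpers

namespace Arena

variable {S : Type}

section PsideLemmas

variable (A : Arena S) (w : Bool → S → S → ℕ) (C : Bool → Set S)

lemma Pside_zero (i : Bool) : A.Pside w C i 0 = Set.univ := by
  cases i <;> simp [Pside, PIter, Pset]

lemma Pside_succ (i : Bool) (j : ℕ) :
    A.Pside w C i (j + 1) = {x ∈ A.Pside w C i j |
      regP (A.uFor w C i) (A.Pside w C i j) (A.Pside w C (!i) j) x =
        regPmin (A.uFor w C i) (A.Pside w C i j) (A.Pside w C (!i) j)} := by
  cases i <;>
    simp [Pside, PIter, Pset, Function.iterate_succ_apply', Dop]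

lemma Pside_succ_subset (i : Bool) (j : ℕ) :
    A.Pside w C i (j + 1) ⊆ A.Pside w C i j := by
  rw [Pside_succ]
  exact fun x hx => hx.1

lemma Pside_antitone (i : Bool) {k j : ℕ} (h : k ≤ j) :
    A.Pside w C i j ⊆ A.Pside w C i k := by
  induction h with
  | refl => exact le_refl _
  | step _ ih => exact le_trans (A.Pside_succ_subset w C i _) ih

lemma Pside_closure (b : Bool) {y y' : A.VStrat}
    (h : ∀ x, A.uFor w C b y' x = A.uFor w C b y x) :
    ∀ t, y ∈ A.Pside w C b t → y' ∈ A.Pside w C b t := by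
  intro t
  induction t with
  | zero => rw [Pside_zero]; exact fun _ => Set.mem_univ _
  | succ t ih =>
    intro hy
    rw [Pside_succ] at hy ⊢
    obtain ⟨h1, h2⟩ := hy
    refine ⟨ih h1, ?_⟩
    have hrp : regP (A.uFor w C b) (A.Pside w C b t) (A.Pside w C (!b) t) y' =
        regP (A.uFor w C b) (A.Pside w C b t) (A.Pside w C (!b) t) y := by
      simp only [regP, h]
    rw [hrp, h2]

end PsideLemmas

end Arena

section MoreRegP

variable {Λ1 Λ2 : Type}

lemma regP_eq_top {u : Λ1 → Λ2 → ℕ∞} {P1 : Set Λ1} {P2 : Set Λ2} {x : Λ1}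
    {y : Λ2} (hy : y ∈ P2) (h : u x y = ⊤) : regP u P1 P2 x = ⊤ := by
  apply top_le_iff.1
  have h2 := le_regP (u := u) (P1 := P1) (x := x) hy
  rw [h, regPairVal, if_pos rfl] at h2
  exact h2

lemma regPmin_eq_top {u : Λ1 → Λ2 → ℕ∞} {P2 : Set Λ2}
    (h : ∀ x, regP u Set.univ P2 x = ⊤) :
    regPmin u Set.univ P2 = ⊤ :=
  le_antisymm le_top (le_iInf₂ fun x _ => (h x).ge)

lemma sep_regP_univ {u : Λ1 → Λ2 → ℕ∞} {P2 : Set Λ2}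
    (h : ∀ x, regP u Set.univ P2 x = ⊤) :
    {x ∈ (Set.univ : Set Λ1) |
      regP u Set.univ P2 x = regPmin u Set.univ P2} = Set.univ := by
  ext x
  simp [h x, regPmin_eq_top h]

end MoreRegP

namespace Arena

variable {S : Type}

section XHat

attribute [local instance] Classical.propDecidable

lemma xhat_bound [Fintype S] (A : Arena S) (w : Bool → S → S → ℕ)
    (C : Bool → Set S) (M : ℕ)
    (hpos : ∀ (κ : Bool) s t, A.edge s t → 1 ≤ w κ s t)
    (hM : ∀ (κ : Bool) s t, w κ s t ≤ M) (i : Bool)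
    (hsucc : ∀ s : S, ∃ t, A.edge s t)
    (Q2 : Set A.VStrat) (li : A.VStrat)
    (hrush : ∀ y ∈ Q2, ∀ x : A.VStrat,
      A.uFor w C (!i) y x ≤ ((2 * (M * Fintype.card S) : ℕ) : ℕ∞))
    (hclosed : ∀ y ∈ Q2, ∀ y' : A.VStrat,
      (∀ x, A.uFor w C (!i) y' x = A.uFor w C (!i) y x) → y' ∈ Q2)
    (hbeat : ∀ y ∈ Q2, ∃ n, A.cur (pairFor i li.1 y.1) n ∈ C i) :
    ∃ xh : A.VStrat, ∀ y ∈ Q2, A.uFor w C i xh y ≤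
      ((M * (2 * (M * Fintype.card S) + Fintype.card S) : ℕ) : ℕ∞) := by
  set cS := Fintype.card S with hcS
  -- the modified strategy
  set xh : Strat S := fun l =>
    if (∃ s ∈ l, s ∈ C (!i)) then A.attStrat hsucc i (C i) l else li.1 l with hxh
  have hxhv : A.Valid xh := by
    intro l
    rw [hxh]
    dsimp only
    split
    · exact A.attStrat_valid hsucc i (C i) l
    · exact li.2 l
  refine ⟨⟨xh, hxhv⟩, ?_⟩
  intro y hy
  set σ : Bool → Strat S := pairFor i xh y.1 with hσ
  set σ₀ : Bool → Strat S := pairFor i li.1 y.1 with hσ₀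
  have hv : ∀ b, A.Valid (σ b) := A.pairFor_valid hxhv y.2
  have hv₀ : ∀ b, A.Valid (σ₀ b) := A.pairFor_valid li.2 y.2
  -- the play visits C !i quickly
  have hvle : A.util (w (!i)) (C (!i)) σ ≤ ((2 * (M * cS) : ℕ) : ℕ∞) := by
    have := hrush y hy ⟨xh, hxhv⟩
    unfold uFor at this
    rwa [pairFor_not] at this
  have hvne : A.util (w (!i)) (C (!i)) σ ≠ ⊤ :=
    ne_top_of_le_ne_top (ENat.coe_ne_top _) hvle
  obtain ⟨k₀, hk₀⟩ := A.exists_visit_of_util_ne_top hvne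
  obtain ⟨m, hmk, hfvo⟩ := A.exists_firstVisit hk₀
  have hm_bound : m ≤ 2 * (M * cS) := by
    have h1 := A.util_eq_of_firstVisit (w := w (!i)) hfvo
    rw [h1] at hvle
    have h2 : pathWeight (w (!i)) (A.outList σ m) ≤ 2 * (M * cS) := by
      exact_mod_cast hvle
    have h3 := A.le_pathWeight_outList (hpos (!i)) hv m
    omega
  -- agreement with the play of li before the first C !i visit
  have hP0 : ∀ l, (∀ s ∈ l, s ∉ C (!i)) → ∀ b, σ b l = σ₀ b l := by
    intro l hl b
    show pairFor i xh y.1 b l = pairFor i li.1 y.1 b l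
    by_cases hb : b = i
    · rw [hb]
      rw [pairFor_same, pairFor_same]
      have hnot : ¬ (∃ s ∈ l, s ∈ C (!i)) := by push_neg; exact hl
      simp only [hxh]
      rw [if_neg hnot]
    · rw [pairFor_other hb, pairFor_other hb]
  have hpre : ∀ m', m' < m → (∀ s ∈ A.outList σ m', s ∉ C (!i)) := by
    intro m' hm' s hs
    obtain ⟨k, hk, rfl⟩ := A.mem_outList.1 hs
    exact hfvo.2 k (by omega)
  have hagree : ∀ k ≤ m, A.outList σ₀ k = A.outList σ k := by
    intro k hk
    exact A.outList_congr hP0 k (fun m' hm' => hpre m' (by omega))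
  have hagreec : ∀ k ≤ m, A.cur σ₀ k = A.cur σ k := by
    intro k hk
    unfold cur
    rw [hagree k hk]
  have hqCo : A.cur σ m ∈ C (!i) := hfvo.1
  by_cases hq : A.cur σ m ∈ A.attrU i (C i)
  · -- the attractor strategy leads to C i
    have hreach : ∃ n, m ≤ n ∧ n ≤ m + cS ∧ A.cur σ n ∈ C i := by
      apply A.attr_reach hsucc i (C i) hv m hq
      intro m' hm' _ _ hown
      rw [cur_succ, hown]
      show pairFor i xh y.1 i (A.outList σ m') = _
      rw [pairFor_same]
      simp only [hxh]
      rw [if_pos ⟨A.cur σ m, A.cur_mem_outList σ hm', hqCo⟩]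
      rfl
    obtain ⟨n, hmn, hncS, hnC⟩ := hreach
    have := A.util_le_of_visit (hM i) hnC
    refine le_trans this ?_
    have : M * n ≤ M * (2 * (M * cS) + cS) :=
      Nat.mul_le_mul_left M (by omega)
    exact_mod_cast this
  · -- C i must be visited before the first C !i visit
    by_cases hvis : ∃ k ≤ m, A.cur σ k ∈ C i
    · obtain ⟨k, hkm, hkC⟩ := hvis
      have := A.util_le_of_visit (hM i) hkC
      refine le_trans this ?_
      have : M * k ≤ M * (2 * (M * cS) + cS) :=
        Nat.mul_le_mul_left M (by omega)
      exact_mod_cast this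
    · exfalso
      push_neg at hvis
      -- build the trap modification of y
      set y' : Strat S := fun l =>
        if (∃ s ∈ l, s ∈ C (!i)) then A.trapStrat hsucc i (C i) l else y.1 l
        with hy'
      have hy'v : A.Valid y' := by
        intro l
        rw [hy']
        dsimp only
        split
        · exact A.trapStrat_valid hsucc i (C i) l
        · exact y.2 l
      have hy'mem : (⟨y', hy'v⟩ : A.VStrat) ∈ Q2 := by
        apply hclosed y hy
        intro x
        unfold uFor
        apply A.util_congr_until
        intro l hl b
        by_cases hb : b = !i
        · rw [hb]
          rw [pairFor_same, pairFor_same]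
          have hnot : ¬ (∃ s ∈ l, s ∈ C (!i)) := by push_neg; exact hl
          simp only [hy']
          rw [if_neg hnot]
        · rw [pairFor_other hb, pairFor_other hb]
      set π : Bool → Strat S := pairFor i li.1 y' with hπ
      have hvπ : ∀ b, A.Valid (π b) := A.pairFor_valid li.2 hy'v
      -- π agrees with σ₀ (hence σ) up to step m
      have hP1 : ∀ l, (∀ s ∈ l, s ∉ C (!i)) → ∀ b, σ₀ b l = π b l := by
        intro l hl b
        show pairFor i li.1 y.1 b l = pairFor i li.1 y' b l
        by_cases hb : b = i
        · rw [hb]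
          rw [pairFor_same, pairFor_same]
        · rw [pairFor_other hb, pairFor_other hb]
          have hnot : ¬ (∃ s ∈ l, s ∈ C (!i)) := by push_neg; exact hl
          simp only [hy']
          rw [if_neg hnot]
      have hpre0 : ∀ m', m' < m → (∀ s ∈ A.outList σ₀ m', s ∉ C (!i)) := by
        intro m' hm'
        rw [hagree m' (by omega)]
        exact hpre m' hm'
      have hagree' : ∀ k ≤ m, A.outList π k = A.outList σ₀ k := by
        intro k hk
        exact A.outList_congr hP1 k (fun m' hm' => hpre0 m' (by omega))
      have hagreec' : ∀ k ≤ m, A.cur π k = A.cur σ k := by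
        intro k hk
        unfold cur
        rw [hagree' k hk, hagree k hk]
      -- after m the play is trapped outside the attractor
      have htrap : ∀ n, m ≤ n → A.cur π n ∉ A.attrU i (C i) := by
        apply A.trap_avoid hsucc i (C i) hvπ m
        · rw [hagreec' m (le_refl m)]
          exact hq
        · intro m' hm' _ hown
          rw [cur_succ]
          show pairFor i li.1 y' (A.owner (A.cur π m')) (A.outList π m') = _
          rw [pairFor_other hown]
          have htr : (∃ s ∈ A.outList π m', s ∈ C (!i)) :=
            ⟨A.cur π m, A.cur_mem_outList π hm', by
              rw [hagreec' m (le_refl m)]; exact hqCo⟩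
          simp only [hy']
          rw [if_pos htr]
          rfl
      -- so the play of li against y' never visits C i
      have hnever : ∀ n, A.cur π n ∉ C i := by
        intro n
        rcases le_or_gt n m with h | h
        · rw [hagreec' n h]
          exact hvis n h
        · intro hC
          exact htrap n (by omega) (A.subset_attrU i (C i) hC)
      obtain ⟨n, hn⟩ := hbeat ⟨y', hy'v⟩ hy'mem
      exact hnever n hn

end XHat

end Arena

attribute [local instance] Classical.propDecidable

/-- In a finite positive weighted arena, every `j`-winning
strategy of player `i` minimizing the `(j+1)`-th regret is `j`-bounded by
`6·M³·|S|`: against every strategy surviving `j` deletions, both players'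
accumulated weights up to the first visit of `Cᵢ` are at most `6·M³·|S|`. -/
theorem jwinning_min_regret_jbounded {S : Type} [Fintype S] (A : Arena S)
    (w : Bool → S → S → ℕ) (C : Bool → Set S) (M : ℕ)
    (hpos : ∀ (κ : Bool) s t, A.edge s t → 1 ≤ w κ s t)
    (hM : ∀ (κ : Bool) s t, w κ s t ≤ M)
    (i : Bool) (j : ℕ) (li : A.VStrat) (hmem : li ∈ A.Pside w C i j)
    (hwin : ∀ lo ∈ A.Pside w C (!i) j,
      ∃ n : ℕ, A.cur (Arena.pairFor i li.1 lo.1) n ∈ C i)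
    (hmin : regP (A.uFor w C i) (A.Pside w C i j) (A.Pside w C (!i) j) li =
      regPmin (A.uFor w C i) (A.Pside w C i j) (A.Pside w C (!i) j)) :
    ∀ lo ∈ A.Pside w C (!i) j, ∀ (κ : Bool) (n : ℕ),
      A.firstVisit (C i) (Arena.pairFor i li.1 lo.1) n →
      Arena.pathWeight (w κ) (A.outList (Arena.pairFor i li.1 lo.1) n) ≤
        6 * M ^ 3 * Fintype.card S := by
  intro lo hlo κ n hfv
  -- every state has a successor
  have hsucc : ∀ s : S, ∃ t, A.edge s t := by
    intro s
    refine ⟨li.1 [s], ?_⟩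
    have := li.2 [s]
    simpa using this
  have hM1 : 1 ≤ M :=
    le_trans (hpos true _ _ (hsucc A.init).choose_spec) (hM true _ _)
  -- the main utility bound
  have Hu : A.uFor w C i li lo ≤
      (((M * (2 * (M * Fintype.card S) + Fintype.card S)) +
        (M * (2 * (M * Fintype.card S) + Fintype.card S)) : ℕ) : ℕ∞) := by
    by_cases hs0 : A.init ∈ A.attrU i (C i)
    · -- Case A : player i can force `C i` in the full game
      have hσsv : A.Valid (A.attStrat hsucc i (C i)) :=
        A.attStrat_valid hsucc i (C i)
      have hfast : ∀ y : A.VStrat,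
          A.uFor w C i ⟨A.attStrat hsucc i (C i), hσsv⟩ y ≤
            ((M * Fintype.card S : ℕ) : ℕ∞) := fun y =>
        A.att_own_util hsucc i (C i) (w i) (hM i) hs0 y.2
      have hli0 : regP (A.uFor w C i) Set.univ Set.univ li =
          regPmin (A.uFor w C i) Set.univ Set.univ := by
        rcases Nat.eq_zero_or_pos j with rfl | hj
        · rw [A.Pside_zero w C i, A.Pside_zero w C (!i)] at hmin
          exact hmin
        · have h1 : li ∈ A.Pside w C i 1 := A.Pside_antitone w C i hj hmem
          rw [show (1 : ℕ) = 0 + 1 from rfl, A.Pside_succ w C i 0,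
            A.Pside_zero w C i, A.Pside_zero w C (!i)] at h1
          exact h1.2
      have hreg : regP (A.uFor w C i) Set.univ Set.univ li ≤
          ((M * Fintype.card S : ℕ) : ℕ∞) := by
        rw [hli0]
        exact le_trans (regPmin_le (Set.mem_univ _))
          (regP_le_of_forall fun y _ => hfast y)
      have h2 : A.uFor w C i li lo ≤
          ((M * Fintype.card S : ℕ) : ℕ∞) + ((M * Fintype.card S : ℕ) : ℕ∞) :=
        regP_extract_le (Set.mem_univ lo) (ENat.coe_ne_top _) hreg
          (le_trans (biInf_le_mem (Set.mem_univ _)) (hfast lo))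
      refine le_trans h2 ?_
      rw [← Nat.cast_add]
      have hle : M * Fintype.card S + M * Fintype.card S ≤
          (M * (2 * (M * Fintype.card S) + Fintype.card S)) +
            (M * (2 * (M * Fintype.card S) + Fintype.card S)) := by
        have : M * Fintype.card S ≤
            M * (2 * (M * Fintype.card S) + Fintype.card S) :=
          Nat.mul_le_mul_left M (by omega)
        omega
      exact_mod_cast hle
    · -- Case B : player i cannot force `C i` in the full game
      -- first, `j ≥ 1`
      have hτnever : ∀ x : A.VStrat, ∀ n',
          A.cur (Arena.pairFor i x.1 (A.trapStrat hsucc i (C i))) n' ∉ C i :=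
        fun x => A.trap_opp_avoid hsucc i (C i) hs0 x.2
      have hj1 : 1 ≤ j := by
        by_contra hj
        have hj0 : j = 0 := by omega
        subst hj0
        obtain ⟨n', hn'⟩ := hwin
          ⟨A.trapStrat hsucc i (C i), A.trapStrat_valid hsucc i (C i)⟩
          (by rw [A.Pside_zero w C (!i)]; trivial)
        exact hτnever li n' hn'
      -- the regret of every player-i strategy in the full game is ⊤
      have hr0top : ∀ x : A.VStrat,
          regP (A.uFor w C i) Set.univ Set.univ x = ⊤ := by
        intro x
        refine regP_eq_top (y := ⟨A.trapStrat hsucc i (C i),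
          A.trapStrat_valid hsucc i (C i)⟩) (Set.mem_univ _) ?_
        exact A.util_eq_top (hτnever x)
      have hP1univ : A.Pside w C i 1 = Set.univ := by
        rw [show (1 : ℕ) = 0 + 1 from rfl, A.Pside_succ w C i 0,
          A.Pside_zero w C i, A.Pside_zero w C (!i)]
        exact sep_regP_univ hr0top
      -- the opponent can force `C !i` in the full game
      have hso : A.init ∈ A.attrU (!i) (C (!i)) := by
        by_contra hso'
        have hτonever : ∀ y : A.VStrat, ∀ n',
            A.cur (Arena.pairFor (!i) y.1 (A.trapStrat hsucc (!i) (C (!i)))) n'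
              ∉ C (!i) :=
          fun y => A.trap_opp_avoid hsucc (!i) (C (!i)) hso' y.2
        have huniv : ∀ t b, A.Pside w C b t = Set.univ := by
          intro t
          induction t with
          | zero => intro b; exact A.Pside_zero w C b
          | succ t ih =>
            intro b
            rw [A.Pside_succ w C b t, ih b, ih (!b)]
            apply sep_regP_univ
            intro x
            have hbcase : b = i ∨ b = !i := by cases b <;> cases i <;> simp
            rcases hbcase with rfl | rfl
            · exact hr0top x
            · refine regP_eq_top (y := ⟨A.trapStrat hsucc (!i) (C (!i)),
                A.trapStrat_valid hsucc (!i) (C (!i))⟩) (Set.mem_univ _) ?_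
              exact A.util_eq_top (hτonever x)
        obtain ⟨n', hn'⟩ := hwin
          ⟨A.trapStrat hsucc i (C i), A.trapStrat_valid hsucc i (C i)⟩
          (by rw [huniv j (!i)]; trivial)
        exact hτnever li n' hn'
      -- every opponent strategy surviving one deletion reaches `C !i` quickly
      have hσov : A.Valid (A.attStrat hsucc (!i) (C (!i))) :=
        A.attStrat_valid hsucc (!i) (C (!i))
      have hfasto : ∀ x : A.VStrat,
          A.uFor w C (!i) ⟨A.attStrat hsucc (!i) (C (!i)), hσov⟩ x ≤
            ((M * Fintype.card S : ℕ) : ℕ∞) := fun x =>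
        A.att_own_util hsucc (!i) (C (!i)) (w (!i)) (hM (!i)) hso x.2
      have hrush1 : ∀ y ∈ A.Pside w C (!i) 1, ∀ x : A.VStrat,
          A.uFor w C (!i) y x ≤ ((2 * (M * Fintype.card S) : ℕ) : ℕ∞) := by
        intro y hy x
        rw [show (1 : ℕ) = 0 + 1 from rfl, A.Pside_succ w C (!i) 0] at hy
        simp only [A.Pside_zero, Bool.not_not] at hy
        obtain ⟨-, hy2⟩ := hy
        have hsmin : regPmin (A.uFor w C (!i)) Set.univ Set.univ ≤
            ((M * Fintype.card S : ℕ) : ℕ∞) :=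
          le_trans (regPmin_le (Set.mem_univ _))
            (regP_le_of_forall fun x' _ => hfasto x')
        have h := regP_extract_le (Set.mem_univ x) (ENat.coe_ne_top _)
          (le_trans (le_of_eq hy2) hsmin)
          (le_trans (biInf_le_mem (Set.mem_univ _)) (hfasto x))
        refine le_trans h ?_
        rw [← Nat.cast_add]
        exact_mod_cast by omega
      -- find the last stage `t ≤ j` where player i's set is still everything
      have hmain : ∃ t, 1 ≤ t ∧ t ≤ j ∧ A.Pside w C i t = Set.univ ∧
          regP (A.uFor w C i) Set.univ (A.Pside w C (!i) t) li =
            regPmin (A.uFor w C i) Set.univ (A.Pside w C (!i) t) ∧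
          (∀ y ∈ A.Pside w C (!i) t, ∃ n',
            A.cur (Arena.pairFor i li.1 y.1) n' ∈ C i) := by
        by_cases hPj : A.Pside w C i j = Set.univ
        · refine ⟨j, hj1, le_refl j, hPj, ?_, hwin⟩
          rw [← hPj]
          exact hmin
        · have hex : ∃ t, A.Pside w C i t ≠ Set.univ := ⟨j, hPj⟩
          have ht'spec := Nat.find_spec hex
          have ht'le : Nat.find hex ≤ j := Nat.find_min' hex hPj
          have ht'2 : 2 ≤ Nat.find hex := by
            by_contra h2
            have h0 : A.Pside w C i (Nat.find hex) = Set.univ := by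
              rcases (by omega : Nat.find hex = 0 ∨ Nat.find hex = 1) with h | h
              · rw [h]; exact A.Pside_zero w C i
              · rw [h]; exact hP1univ
            exact ht'spec h0
          set t := Nat.find hex - 1 with ht
          have htuniv : A.Pside w C i t = Set.univ := by
            by_contra hne
            have := Nat.find_min' hex hne
            omega
          have ht1 : t + 1 = Nat.find hex := by omega
          have hrt_ne : regPmin (A.uFor w C i) Set.univ
              (A.Pside w C (!i) t) ≠ ⊤ := by
            intro htop
            apply ht'spec
            rw [← ht1, A.Pside_succ w C i t, htuniv]
            ext x
            simp only [Set.mem_setOf_eq, Set.mem_univ, true_and, iff_true]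
            rw [htop]
            apply top_le_iff.1
            rw [← htop]
            exact regPmin_le (Set.mem_univ x)
          have hli : li ∈ A.Pside w C i (t + 1) :=
            A.Pside_antitone w C i (by omega) hmem
          rw [A.Pside_succ w C i t, htuniv] at hli
          obtain ⟨-, hlireg⟩ := hli
          refine ⟨t, by omega, by omega, htuniv, hlireg, ?_⟩
          intro y hy
          have hne := regP_extract_ne_top hy hrt_ne (le_of_eq hlireg)
          exact A.exists_visit_of_util_ne_top hne
      obtain ⟨t, ht1, htj, htuniv, hlireg, hbeat⟩ := hmain
      have hQ2sub1 : A.Pside w C (!i) t ⊆ A.Pside w C (!i) 1 :=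
        A.Pside_antitone w C (!i) ht1
      obtain ⟨xh, hxh⟩ := A.xhat_bound w C M hpos hM i hsucc
        (A.Pside w C (!i) t) li
        (fun y hy x => hrush1 y (hQ2sub1 hy) x)
        (fun y hy y' hvv => A.Pside_closure w C (!i) hvv t hy)
        hbeat
      have hregli : regP (A.uFor w C i) Set.univ (A.Pside w C (!i) t) li ≤
          ((M * (2 * (M * Fintype.card S) + Fintype.card S) : ℕ) : ℕ∞) := by
        rw [hlireg]
        exact le_trans (regPmin_le (Set.mem_univ xh)) (regP_le_of_forall (hxh))
      have hlo' : lo ∈ A.Pside w C (!i) t := A.Pside_antitone w C (!i) htj hlo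
      have h2 := regP_extract_le hlo' (ENat.coe_ne_top _) hregli
        (le_trans (biInf_le_mem (Set.mem_univ xh)) (hxh lo hlo'))
      refine le_trans h2 ?_
      rw [← Nat.cast_add]
  -- extract the path-weight bounds
  have hval := A.util_eq_of_firstVisit (w := w i) hfv
  have Hu' : A.util (w i) (C i) (Arena.pairFor i li.1 lo.1) ≤
      (((M * (2 * (M * Fintype.card S) + Fintype.card S)) +
        (M * (2 * (M * Fintype.card S) + Fintype.card S)) : ℕ) : ℕ∞) := Hu
  rw [hval] at Hu'
  have hWi : Arena.pathWeight (w i) (A.outList (Arena.pairFor i li.1 lo.1) n) ≤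
      (M * (2 * (M * Fintype.card S) + Fintype.card S)) +
        (M * (2 * (M * Fintype.card S) + Fintype.card S)) := by
    exact_mod_cast Hu'
  have hv : ∀ b, A.Valid (Arena.pairFor i li.1 lo.1 b) :=
    A.pairFor_valid li.2 lo.2
  have hnle : n ≤ Arena.pathWeight (w i) (A.outList (Arena.pairFor i li.1 lo.1) n) :=
    A.le_pathWeight_outList (hpos i) hv n
  have hκle : Arena.pathWeight (w κ) (A.outList (Arena.pairFor i li.1 lo.1) n) ≤
      M * n := A.pathWeight_outList_le (hM κ) _ n
  have h1 : Arena.pathWeight (w κ) (A.outList (Arena.pairFor i li.1 lo.1) n) ≤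
      M * ((M * (2 * (M * Fintype.card S) + Fintype.card S)) +
        (M * (2 * (M * Fintype.card S) + Fintype.card S))) :=
    le_trans hκle (Nat.mul_le_mul_left M (le_trans hnle hWi))
  refine le_trans h1 ?_
  have e1 : M * ((M * (2 * (M * Fintype.card S) + Fintype.card S)) +
      (M * (2 * (M * Fintype.card S) + Fintype.card S))) =
      4 * (M ^ 3 * Fintype.card S) + 2 * (M ^ 2 * Fintype.card S) := by
    ring
  have e2 : 6 * M ^ 3 * Fintype.card S = 6 * (M ^ 3 * Fintype.card S) := by
    ring
  have h23 : M ^ 2 * Fintype.card S ≤ M ^ 3 * Fintype.card S :=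
    Nat.mul_le_mul_right (Fintype.card S) (Nat.pow_le_pow_right hM1 (by omega))
  rw [e1, e2]
  omega
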